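/- Let d ∈ ℕ, c ≥ 0, m ∈ ℕ₀, R ≥ e_m, and let V ∈ L¹_loc be real-valued with V(x) ≤ (d(4-d)+4c+c²)/(4|x|²) + ((c+2)/(2|x|²)) Σ_{j=1}^m ∏_{k=1}^j (ln_k(|x|))^{-1} for all |x| > R. Define ψ^l_{c,m}(x) := |x|^{-c/2-d/2} ∏_{j=1}^m (ln_j(|x|))^{-1/2}. Then ψ^l_{c,m} is a subsolution of -Δ + V at energy 0 on U_R = {x : |x| > R}: for every nonnegative φ ∈ C_c^∞(U_R), ∫ (∇φ·∇ψ^l_{c,m} + V φ ψ^l_{c,m}) dx ≤ 0. -/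

import Mathlib

open MeasureTheory Real Filter Finset
open scoped RealInnerProductSpace ENNReal Topology

/-- Iterated exponential: `iterExp 0 = 0`, `iterExp (n+1) = exp (iterExp n)`
(the `e_n` of the paper). -/
noncomputable def iterExp : ℕ → ℝ
  | 0 => 0
  | n + 1 => Real.exp (iterExp n)

/-- Iterated logarithm: `iterLog 1 r = log r`, `iterLog (n+1) r = log (iterLog n r)`
(the `ln_n` of the paper). -/
noncomputable def iterLog : ℕ → ℝ → ℝ
  | 0, r => r
  | n + 1, r => Real.log (iterLog n r)

/-- The critical potential bound
`(d(4-d)+4c+c²)/(4r²) + ((c+2)/(2r²)) Σ_{j=1}^m ∏_{k=1}^j (ln_k r)⁻¹`. -/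
noncomputable def lowerBound (d : ℕ) (c : ℝ) (m : ℕ) (r : ℝ) : ℝ :=
  ((d : ℝ) * (4 - (d : ℝ)) + 4 * c + c ^ 2) / (4 * r ^ 2)
    + ((c + 2) / (2 * r ^ 2)) * ∑ j ∈ Finset.Icc 1 m, ∏ k ∈ Finset.Icc 1 j, (iterLog k r)⁻¹

/- ## Real-line auxiliary layer -/

lemma iterExp_nonneg (n : ℕ) : 0 ≤ iterExp n := by
  cases n with
  | zero => simp [iterExp]
  | succ n => exact (Real.exp_pos _).le

lemma iterLog_zero' (r : ℝ) : iterLog 0 r = r := rfl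
lemma iterLog_succ' (n : ℕ) (r : ℝ) : iterLog (n + 1) r = Real.log (iterLog n r) := rfl

lemma iterExp_lt_iterLog {m : ℕ} {R r : ℝ} (hR : iterExp m ≤ R) (hr : R < r) :
    ∀ k, k ≤ m → iterExp (m - k) < iterLog k r := by
  intro k
  induction k with
  | zero =>
    intro _
    simpa [iterLog_zero'] using lt_of_le_of_lt hR hr
  | succ k ih =>
    intro hk
    have hk' : k ≤ m := Nat.le_of_succ_le hk
    have h1 : iterExp (m - k) < iterLog k r := ih hk'
    have h2 : m - k = (m - (k + 1)) + 1 := by omega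
    rw [h2] at h1
    have h3 : (0:ℝ) < Real.exp (iterExp (m - (k + 1))) := Real.exp_pos _
    have h1' : Real.exp (iterExp (m - (k+1))) < iterLog k r := by
      simpa [iterExp] using h1
    calc iterExp (m - (k + 1)) = Real.log (Real.exp (iterExp (m - (k+1)))) := (Real.log_exp _).symm
      _ < Real.log (iterLog k r) := Real.log_lt_log h3 h1'

lemma iterLog_pos {m : ℕ} {R r : ℝ} (hR : iterExp m ≤ R) (hr : R < r) :
    ∀ k, k ≤ m → 0 < iterLog k r :=
  fun k hk => lt_of_le_of_lt (iterExp_nonneg _) (iterExp_lt_iterLog hR hr k hk)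

noncomputable def pDL (k : ℕ) (r : ℝ) : ℝ := ∏ i ∈ Finset.range k, (iterLog i r)⁻¹
noncomputable def pPP (j : ℕ) (r : ℝ) : ℝ := ∏ k ∈ Finset.Icc 1 j, (iterLog k r)⁻¹
noncomputable def pSG (k : ℕ) (r : ℝ) : ℝ := ∑ i ∈ Finset.range k, (iterLog i r)⁻¹ * pDL i r

noncomputable def pFF (d : ℕ) (c : ℝ) (m : ℕ) (r : ℝ) : ℝ :=
  (-(c / 2) - (d : ℝ) / 2) * Real.log r + ∑ j ∈ Finset.Icc 1 m, (-(1:ℝ)/2) * Real.log (iterLog j r)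

noncomputable def pFF1 (d : ℕ) (c : ℝ) (m : ℕ) (r : ℝ) : ℝ :=
  (-(c / 2) - (d : ℝ) / 2) * r⁻¹ + ∑ j ∈ Finset.Icc 1 m, (-(1:ℝ)/2) * pDL (j+1) r

noncomputable def pFF2 (d : ℕ) (c : ℝ) (m : ℕ) (r : ℝ) : ℝ :=
  (-(c / 2) - (d : ℝ) / 2) * (-(r ^ 2)⁻¹)
    + ∑ j ∈ Finset.Icc 1 m, (-(1:ℝ)/2) * (-(pDL (j+1) r * pSG (j+1) r))

lemma sum_Icc_one (k : ℕ) (g : ℕ → ℝ) : ∑ i ∈ Finset.Icc 1 k, g i = ∑ i ∈ Finset.range k, g (i+1) := by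
  rw [← Finset.Ico_add_one_right_eq_Icc, Finset.sum_Ico_eq_sum_range]
  simp [Nat.add_comm]

lemma prod_Icc_one (k : ℕ) (g : ℕ → ℝ) : ∏ i ∈ Finset.Icc 1 k, g i = ∏ i ∈ Finset.range k, g (i+1) := by
  rw [← Finset.Ico_add_one_right_eq_Icc, Finset.prod_Ico_eq_prod_range]
  simp [Nat.add_comm]

lemma pDL_succ (j : ℕ) (r : ℝ) : pDL (j+1) r = r⁻¹ * pPP j r := by
  simp only [pDL, pPP]
  rw [Finset.prod_range_succ', prod_Icc_one]
  simp [iterLog_zero', mul_comm]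

lemma pDL_succ' (j : ℕ) (r : ℝ) : pDL (j+1) r = pDL j r * (iterLog j r)⁻¹ := by
  simp only [pDL, Finset.prod_range_succ]

lemma pSG_succ (k : ℕ) (r : ℝ) :
    pSG (k+1) r = r⁻¹ * (1 + ∑ i ∈ Finset.Icc 1 k, pPP i r) := by
  simp only [pSG]
  rw [Finset.sum_range_succ']
  have h1 : ∀ i, (iterLog (i+1) r)⁻¹ * pDL (i+1) r = r⁻¹ * pPP (i+1) r := by
    intro i
    have : pDL (i+2) r = (iterLog (i+1) r)⁻¹ * pDL (i+1) r := by
      rw [pDL_succ' (i+1)]; ring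
    rw [← this, pDL_succ]
  simp only [h1]
  rw [sum_Icc_one k (fun i => pPP i r)]
  simp only [iterLog_zero', pDL, Finset.range_zero, Finset.prod_empty, mul_one]
  rw [mul_add, mul_one, Finset.mul_sum, add_comm]

section deriv

variable {m : ℕ} {r : ℝ}

lemma hasDerivAt_iterLog (hp : ∀ k, k ≤ m → 0 < iterLog k r) :
    ∀ k, k ≤ m → HasDerivAt (iterLog k) (pDL k r) r := by
  intro k
  induction k with
  | zero =>
    intro _
    have h : iterLog 0 = fun s : ℝ => s := funext fun s => rfl
    rw [h]
    have : pDL 0 r = 1 := by simp [pDL]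
    rw [this]; exact hasDerivAt_id' r
  | succ k ih =>
    intro hk
    have hk' : k ≤ m := Nat.le_of_succ_le hk
    have h := (ih hk').log (ne_of_gt (hp k hk'))
    have hfun : (fun s => Real.log (iterLog k s)) = iterLog (k+1) := funext fun s => rfl
    rw [hfun] at h
    have : pDL (k+1) r = pDL k r / iterLog k r := by
      rw [pDL_succ' k, div_eq_mul_inv]
    rw [this]
    exact h

lemma hasDerivAt_pDL (hp : ∀ k, k ≤ m → 0 < iterLog k r) :
    ∀ k, k ≤ m + 1 → HasDerivAt (fun s => pDL k s) (-(pDL k r * pSG k r)) r := by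
  intro k
  induction k with
  | zero =>
    intro _
    simp only [pDL, pSG, Finset.range_zero, Finset.prod_empty, Finset.sum_empty]
    simpa using hasDerivAt_const r (1:ℝ)
  | succ k ih =>
    intro hk
    have hk' : k ≤ m := Nat.lt_succ_iff.mp hk
    have h := (ih (Nat.le_succ_of_le hk')).mul
      ((hasDerivAt_iterLog hp k hk').inv (ne_of_gt (hp k hk')))
    have hfun : (fun s => pDL (k+1) s) = fun s => pDL k s * (iterLog k s)⁻¹ :=
      funext fun s => pDL_succ' k s
    rw [hfun]
    refine h.congr_deriv ?_
    simp only [Pi.inv_apply]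
    have hne : iterLog k r ≠ 0 := ne_of_gt (hp k hk')
    have h1 : pDL (k+1) r = pDL k r * (iterLog k r)⁻¹ := pDL_succ' k r
    have h2 : pSG (k+1) r = pSG k r + (iterLog k r)⁻¹ * pDL k r := by
      simp only [pSG, Finset.sum_range_succ]
    rw [h1, h2]
    have h3 : (iterLog k r)⁻¹ * (iterLog k r)⁻¹ = ((iterLog k r)^2)⁻¹ := by
      rw [sq, mul_inv]
    field_simp
    ring

lemma hasDerivAt_pFF (d : ℕ) (c : ℝ) (hp : ∀ k, k ≤ m → 0 < iterLog k r) :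
    HasDerivAt (pFF d c m) (pFF1 d c m r) r := by
  have hr : 0 < r := by simpa [iterLog_zero'] using hp 0 (Nat.zero_le m)
  have h1 : HasDerivAt (fun s : ℝ => (-(c / 2) - (d : ℝ) / 2) * Real.log s)
      ((-(c / 2) - (d : ℝ) / 2) * r⁻¹) r :=
    (Real.hasDerivAt_log (ne_of_gt hr)).const_mul _
  have h2 : HasDerivAt (fun s : ℝ => ∑ j ∈ Finset.Icc 1 m, (-(1:ℝ)/2) * Real.log (iterLog j s))
      (∑ j ∈ Finset.Icc 1 m, (-(1:ℝ)/2) * pDL (j+1) r) r := by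
    apply HasDerivAt.fun_sum
    intro j hj
    have hj' : j ≤ m := (Finset.mem_Icc.mp hj).2
    have h := ((hasDerivAt_iterLog hp j hj').log (ne_of_gt (hp j hj'))).const_mul (-(1:ℝ)/2)
    refine h.congr_deriv ?_
    rw [pDL_succ' j]
    ring
  exact h1.add h2

lemma hasDerivAt_pFF1 (d : ℕ) (c : ℝ) (hp : ∀ k, k ≤ m → 0 < iterLog k r) :
    HasDerivAt (pFF1 d c m) (pFF2 d c m r) r := by
  have hr : 0 < r := by simpa [iterLog_zero'] using hp 0 (Nat.zero_le m)
  have h1 : HasDerivAt (fun s : ℝ => (-(c / 2) - (d : ℝ) / 2) * s⁻¹)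
      ((-(c / 2) - (d : ℝ) / 2) * (-(r ^ 2)⁻¹)) r :=
    (hasDerivAt_inv (ne_of_gt hr)).const_mul _
  have h2 : HasDerivAt (fun s : ℝ => ∑ j ∈ Finset.Icc 1 m, (-(1:ℝ)/2) * pDL (j+1) s)
      (∑ j ∈ Finset.Icc 1 m, (-(1:ℝ)/2) * (-(pDL (j+1) r * pSG (j+1) r))) r := by
    apply HasDerivAt.fun_sum
    intro j hj
    have hj' : j ≤ m := (Finset.mem_Icc.mp hj).2
    exact (hasDerivAt_pDL hp (j+1) (Nat.succ_le_succ hj')).const_mul _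
  exact h1.add h2

end deriv

/- ## The key inequality -/

lemma arith (D c T S r : ℝ) (hr : 0 < r) (hT : 0 ≤ T) (hS : 0 ≤ S) :
    (D * (4 - D) + 4 * c + c ^ 2) / (4 * r ^ 2) + ((c + 2) / (2 * r ^ 2)) * T ≤
      (-((c / 2 + D / 2) + T / 2) / r) ^ 2 + ((c / 2 + D / 2) + T / 2 + S / 2) / r ^ 2
        + (D - 1) * (-((c / 2 + D / 2) + T / 2) / r) / r := by
  rw [← sub_nonneg]
  have h : (-((c / 2 + D / 2) + T / 2) / r) ^ 2 + ((c / 2 + D / 2) + T / 2 + S / 2) / r ^ 2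
        + (D - 1) * (-((c / 2 + D / 2) + T / 2) / r) / r
      - ((D * (4 - D) + 4 * c + c ^ 2) / (4 * r ^ 2) + ((c + 2) / (2 * r ^ 2)) * T)
      = (T ^ 2 / 4 + S / 2) / r ^ 2 := by
    field_simp
    ring
  rw [h]
  positivity

section key

variable {m : ℕ} {r : ℝ}

lemma pPP_pos (hp : ∀ k, k ≤ m → 0 < iterLog k r) {j : ℕ} (hj : j ≤ m) : 0 < pPP j r := by
  apply Finset.prod_pos
  intro k hk
  exact inv_pos.mpr (hp k (le_trans (Finset.mem_Icc.mp hk).2 hj))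

lemma pFF1_eq (d : ℕ) (c : ℝ) (hr : r ≠ 0) :
    pFF1 d c m r = -((c / 2 + (d:ℝ) / 2) + (∑ j ∈ Finset.Icc 1 m, pPP j r) / 2) / r := by
  have h1 : ∀ j ∈ Finset.Icc 1 m, (-(1:ℝ)/2) * pDL (j+1) r = (-(1:ℝ)/2 * r⁻¹) * pPP j r := by
    intro j _
    rw [pDL_succ]
    ring
  simp only [pFF1]
  rw [Finset.sum_congr rfl h1, ← Finset.mul_sum]
  field_simp
  ring

lemma pFF2_eq (d : ℕ) (c : ℝ) (hr : r ≠ 0) :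
    pFF2 d c m r = ((c / 2 + (d:ℝ) / 2) + (∑ j ∈ Finset.Icc 1 m, pPP j r) / 2
      + (∑ j ∈ Finset.Icc 1 m, pPP j r * ∑ i ∈ Finset.Icc 1 j, pPP i r) / 2) / r ^ 2 := by
  have h1 : ∀ j ∈ Finset.Icc 1 m, (-(1:ℝ)/2) * (-(pDL (j+1) r * pSG (j+1) r))
      = ((r^2)⁻¹/2) * (pPP j r + pPP j r * ∑ i ∈ Finset.Icc 1 j, pPP i r) := by
    intro j _
    rw [pDL_succ, pSG_succ]
    have : r⁻¹ * r⁻¹ = (r^2)⁻¹ := by rw [sq, mul_inv]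
    field_simp
  simp only [pFF2]
  rw [Finset.sum_congr rfl h1, ← Finset.mul_sum, Finset.sum_add_distrib]
  field_simp
  ring

lemma key_ineq (d : ℕ) (c : ℝ) (hp : ∀ k, k ≤ m → 0 < iterLog k r) :
    lowerBound d c m r ≤
      pFF1 d c m r ^ 2 + pFF2 d c m r + ((d:ℝ) - 1) * pFF1 d c m r / r := by
  have hr : 0 < r := by simpa [iterLog_zero'] using hp 0 (Nat.zero_le m)
  have hT : 0 ≤ ∑ j ∈ Finset.Icc 1 m, pPP j r :=
    Finset.sum_nonneg fun j hj => (pPP_pos hp (Finset.mem_Icc.mp hj).2).le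
  have hS : 0 ≤ ∑ j ∈ Finset.Icc 1 m, pPP j r * ∑ i ∈ Finset.Icc 1 j, pPP i r := by
    apply Finset.sum_nonneg
    intro j hj
    apply mul_nonneg (pPP_pos hp (Finset.mem_Icc.mp hj).2).le
    exact Finset.sum_nonneg fun i hi =>
      (pPP_pos hp (le_trans (Finset.mem_Icc.mp hi).2 (Finset.mem_Icc.mp hj).2)).le
  rw [pFF1_eq d c hr.ne', pFF2_eq d c hr.ne']
  have harith := arith (d:ℝ) c (∑ j ∈ Finset.Icc 1 m, pPP j r)
    (∑ j ∈ Finset.Icc 1 m, pPP j r * ∑ i ∈ Finset.Icc 1 j, pPP i r) r hr hT hS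
  simp only [lowerBound, pPP]
  simpa only [pPP] using harith

end key

/-- `ψˡ_{c,m}(x) = |x|^{-c/2-d/2} ∏_{j=1}^m (ln_j |x|)^{-1/2}`. -/
noncomputable def psiL (d : ℕ) (c : ℝ) (m : ℕ) (x : EuclideanSpace ℝ (Fin d)) : ℝ :=
  ‖x‖ ^ (-(c / 2) - (d : ℝ) / 2) * ∏ j ∈ Finset.Icc 1 m, (iterLog j ‖x‖) ^ (-(1 : ℝ) / 2)

/- ## Euclidean layer -/

section Euclid

variable {d : ℕ}

local notation "E" => EuclideanSpace ℝ (Fin d)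

lemma psiL_eq_exp (c : ℝ) {m : ℕ} {r : ℝ} (hp : ∀ k, k ≤ m → 0 < iterLog k r)
    {x : E} (hx : ‖x‖ = r) : psiL d c m x = Real.exp (pFF d c m ‖x‖) := by
  subst hx
  have hr : 0 < ‖x‖ := by simpa [iterLog_zero'] using hp 0 (Nat.zero_le m)
  have h1 : ‖x‖ ^ (-(c / 2) - (d : ℝ) / 2)
      = Real.exp ((-(c / 2) - (d : ℝ) / 2) * Real.log ‖x‖) := by
    rw [Real.rpow_def_of_pos hr, mul_comm]
  have h2 : ∀ j ∈ Finset.Icc 1 m, (iterLog j ‖x‖) ^ (-(1:ℝ)/2)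
      = Real.exp ((-(1:ℝ)/2) * Real.log (iterLog j ‖x‖)) := by
    intro j hj
    rw [Real.rpow_def_of_pos (hp j (Finset.mem_Icc.mp hj).2), mul_comm]
  simp only [psiL]
  rw [h1, Finset.prod_congr rfl h2, ← Real.exp_sum, ← Real.exp_add]
  rfl

lemma contDiffAt_iterLog {m : ℕ} {r : ℝ} (hp : ∀ k, k ≤ m → 0 < iterLog k r) :
    ∀ k, k ≤ m → ContDiffAt ℝ (⊤ : ℕ∞) (iterLog k) r := by
  intro k
  induction k with
  | zero =>
    intro _
    have h : iterLog 0 = fun s : ℝ => s := funext fun s => rfl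
    rw [h]
    exact contDiffAt_id
  | succ k ih =>
    intro hk
    have hk' : k ≤ m := Nat.le_of_succ_le hk
    have h := (ih hk').log (ne_of_gt (hp k hk'))
    exact h

lemma contDiffAt_pFF (c : ℝ) {m : ℕ} {r : ℝ} (hp : ∀ k, k ≤ m → 0 < iterLog k r) :
    ContDiffAt ℝ (⊤ : ℕ∞) (pFF d c m) r := by
  have hr : 0 < r := by simpa [iterLog_zero'] using hp 0 (Nat.zero_le m)
  apply ContDiffAt.add
  · exact contDiffAt_const.mul (contDiffAt_id.log hr.ne')
  · apply ContDiffAt.sum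
    intro j hj
    exact contDiffAt_const.mul
      ((contDiffAt_iterLog hp j (Finset.mem_Icc.mp hj).2).log (ne_of_gt (hp j (Finset.mem_Icc.mp hj).2)))

lemma hasFDerivAt_radial {u : ℝ → ℝ} {u' : ℝ} {x : E} (hx : x ≠ 0)
    (hu : HasDerivAt u u' ‖x‖) :
    HasFDerivAt (fun y : E => u ‖y‖) ((u' / ‖x‖) • (innerSL ℝ x)) x := by
  have h0 : (0:ℝ) < ‖x‖ := norm_pos_iff.mpr hx
  have hinner := (hasFDerivAt_id (𝕜 := ℝ) x).inner ℝ (hasFDerivAt_id x)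
  have hsq : ⟪x, x⟫ = ‖x‖ * ‖x‖ := real_inner_self_eq_norm_mul_norm x
  have hne : ⟪x, x⟫ ≠ 0 := by rw [hsq]; positivity
  have hsqrt : HasDerivAt Real.sqrt (1 / (2 * Real.sqrt ⟪x, x⟫)) ⟪x, x⟫ :=
    Real.hasDerivAt_sqrt hne
  have hinner' : HasFDerivAt (fun y : E => ⟪y, y⟫)
      ((fderivInnerCLM ℝ (x, x)).comp
        ((ContinuousLinearMap.id ℝ E).prod (ContinuousLinearMap.id ℝ E))) x := hinner
  have hcomp := hsqrt.comp_hasFDerivAt (f := fun y : E => ⟪y, y⟫) x hinner'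
  have hfun : (fun y : E => Real.sqrt ⟪y, y⟫) = fun y : E => ‖y‖ := by
    funext y
    rw [real_inner_self_eq_norm_mul_norm, Real.sqrt_mul_self (norm_nonneg y)]
  have hcomp2 : HasFDerivAt (fun y : E => ‖y‖)
      ((1 / (2 * Real.sqrt ⟪x, x⟫)) • ((fderivInnerCLM ℝ (x, x)).comp
        ((ContinuousLinearMap.id ℝ E).prod (ContinuousLinearMap.id ℝ E)))) x := by
    rw [← hfun]
    exact hcomp
  have hufin := hu.comp_hasFDerivAt (f := fun y : E => ‖y‖) x hcomp2
  refine hufin.congr_fderiv ?_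
  ext v
  have hsv : Real.sqrt ⟪x, x⟫ = ‖x‖ := by
    rw [hsq, Real.sqrt_mul_self (norm_nonneg x)]
  simp only [ContinuousLinearMap.smul_apply, innerSL_apply_apply, ContinuousLinearMap.comp_apply,
    fderivInnerCLM_apply, ContinuousLinearMap.prod_apply, ContinuousLinearMap.coe_id', id_eq,
    smul_eq_mul, hsv]
  rw [real_inner_comm v x]
  field_simp
  ring

end Euclid

set_option maxHeartbeats 1000000 in
/-- If `V ≤ lowerBound` on `U_R = {|x| > R}` with `R ≥ e_m`, then `ψˡ_{c,m}` is a
subsolution of `-Δ + V` at energy `0` on `U_R`: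
`∫ (∇φ·∇ψˡ + V φ ψˡ) ≤ 0` for every nonnegative `φ ∈ C_c^∞(U_R)`. -/
theorem psiL_subsolution (d : ℕ) (hd : 0 < d) (c : ℝ) (hc : 0 ≤ c) (m : ℕ)
    (R : ℝ) (hR : iterExp m ≤ R)
    (V : EuclideanSpace ℝ (Fin d) → ℝ)
    (hVloc : LocallyIntegrableOn V {x : EuclideanSpace ℝ (Fin d) | R < ‖x‖})
    (hV : ∀ x : EuclideanSpace ℝ (Fin d), R < ‖x‖ → V x ≤ lowerBound d c m ‖x‖) :
    ∀ φ : EuclideanSpace ℝ (Fin d) → ℝ, ContDiff ℝ (⊤ : ℕ∞) φ → HasCompactSupport φ →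
      tsupport φ ⊆ {x : EuclideanSpace ℝ (Fin d) | R < ‖x‖} → (∀ x, 0 ≤ φ x) →
      ∫ x, (⟪gradient φ x, gradient (psiL d c m) x⟫ + V x * (φ x * psiL d c m x)) ≤ 0 := by
  intro φ hφ hφc hφsupp hφ0
  by_cases hKne : (tsupport φ).Nonempty
  case neg =>
    have hφz : φ = fun _ => 0 := by
      funext x
      by_contra hne
      exact hKne ⟨x, subset_tsupport φ (by simpa [Function.mem_support] using hne)⟩
    rw [hφz]
    have hzero : ∀ x : EuclideanSpace ℝ (Fin d),
        (⟪gradient (fun _ => (0:ℝ)) x, gradient (psiL d c m) x⟫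
          + V x * ((fun _ => (0:ℝ)) x * psiL d c m x)) = 0 := by
      intro x
      simp [gradient_const]
    rw [show (fun x => (⟪gradient (fun _ => (0:ℝ)) x, gradient (psiL d c m) x⟫
          + V x * ((fun _ => (0:ℝ)) x * psiL d c m x))) = fun _ => (0:ℝ) from funext hzero]
    simp
  case pos =>
  have hone : (1 : WithTop ℕ∞) ≤ ((⊤:ℕ∞) : WithTop ℕ∞) := by exact_mod_cast le_top
  have htop1 : ((⊤:ℕ∞) : WithTop ℕ∞) + 1 ≤ ((⊤:ℕ∞) : WithTop ℕ∞) := ENat.coe_top_add_one.le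
  have hR0 : 0 ≤ R := le_trans (iterExp_nonneg m) hR
  set K := tsupport φ with hK_def
  have hK : IsCompact K := hφc
  obtain ⟨x₀, hx₀K, hx₀min⟩ := hK.exists_isMinOn hKne continuous_norm.continuousOn
  have hRM : R < ‖x₀‖ := hφsupp hx₀K
  set M := ‖x₀‖ with hM_def
  set R₁ := R + (M - R) / 3 with hR₁def
  set R₂ := R + 2 * ((M - R) / 3) with hR₂def
  have hRR₁ : R < R₁ := by rw [hR₁def]; linarith
  have hR₁R₂ : R₁ < R₂ := by rw [hR₁def, hR₂def]; linarith
  have hR₂M : R₂ < M := by rw [hR₂def]; linarith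
  have hR₁0 : 0 < R₁ := lt_of_le_of_lt hR0 hRR₁
  have hRR₂ : R < R₂ := lt_trans hRR₁ hR₁R₂
  have hdenom : 0 < R₂ ^ 2 - R₁ ^ 2 := by nlinarith
  set χ : EuclideanSpace ℝ (Fin d) → ℝ :=
    fun y => Real.smoothTransition ((‖y‖ ^ 2 - R₁ ^ 2) / (R₂ ^ 2 - R₁ ^ 2)) with hχdef
  have hχsm : ContDiff ℝ (⊤ : ℕ∞) χ :=
    Real.smoothTransition.contDiff.comp
      (((contDiff_norm_sq ℝ).sub contDiff_const).div_const _)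
  have hχ1 : ∀ y : EuclideanSpace ℝ (Fin d), R₂ ≤ ‖y‖ → χ y = 1 := by
    intro y hy
    apply Real.smoothTransition.one_of_one_le
    rw [le_div_iff₀ hdenom]
    nlinarith
  have hχ0 : ∀ y : EuclideanSpace ℝ (Fin d), ‖y‖ < R₁ → χ y = 0 := by
    intro y hy
    apply Real.smoothTransition.zero_of_nonpos
    apply div_nonpos_of_nonpos_of_nonneg _ hdenom.le
    nlinarith [norm_nonneg y]
  set ψ := psiL d c m with hψdef
  set Ψ : EuclideanSpace ℝ (Fin d) → ℝ := fun y => χ y * ψ y with hΨdef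
  have hpos : ∀ y : EuclideanSpace ℝ (Fin d), R < ‖y‖ → ∀ k, k ≤ m → 0 < iterLog k ‖y‖ :=
    fun y hy => iterLog_pos hR hy
  have hψexp : ∀ y : EuclideanSpace ℝ (Fin d), R < ‖y‖ → ψ y = Real.exp (pFF d c m ‖y‖) :=
    fun y hy => psiL_eq_exp c (hpos y hy) rfl
  have hψsm : ∀ y : EuclideanSpace ℝ (Fin d), R < ‖y‖ → ContDiffAt ℝ (⊤ : ℕ∞) ψ y := by
    intro y hy
    have hy0 : y ≠ 0 := by
      intro h
      rw [h, norm_zero] at hy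
      linarith
    have h1 : ContDiffAt ℝ (⊤ : ℕ∞) (fun s : ℝ => Real.exp (pFF d c m s)) ‖y‖ :=
      Real.contDiff_exp.contDiffAt.comp _ (contDiffAt_pFF c (hpos y hy))
    have h2 := h1.comp y (contDiffAt_norm ℝ hy0)
    apply h2.congr_of_eventuallyEq
    have hopen : IsOpen {z : EuclideanSpace ℝ (Fin d) | R < ‖z‖} :=
      isOpen_lt continuous_const continuous_norm
    filter_upwards [hopen.mem_nhds hy] with z hz
    simpa [Function.comp] using hψexp z hz
  have hΨsm : ContDiff ℝ (⊤ : ℕ∞) Ψ := by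
    rw [contDiff_iff_contDiffAt]
    intro y
    rcases lt_or_ge ‖y‖ R₁ with hy | hy
    · have hopen : IsOpen {z : EuclideanSpace ℝ (Fin d) | ‖z‖ < R₁} :=
        isOpen_lt continuous_norm continuous_const
      refine (contDiffAt_const (c := (0:ℝ))).congr_of_eventuallyEq ?_
      filter_upwards [hopen.mem_nhds hy] with z hz
      simp [hΨdef, hχ0 z hz]
    · exact hχsm.contDiffAt.mul (hψsm y (lt_of_lt_of_le hRR₁ hy))
  set O : Set (EuclideanSpace ℝ (Fin d)) := {z | R₂ < ‖z‖} with hOdef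
  have hOopen : IsOpen O := isOpen_lt continuous_const continuous_norm
  have hKO : K ⊆ O := fun z hz => lt_of_lt_of_le hR₂M ((isMinOn_iff.mp hx₀min) z hz)
  have hΨO : ∀ z ∈ O, Ψ z = Real.exp (pFF d c m ‖z‖) := by
    intro z hz
    rw [hΨdef]
    simp only
    rw [hχ1 z (le_of_lt hz), one_mul, hψexp z (lt_trans hRR₂ hz)]
  -- radial derivative data
  set Wf : ℝ → ℝ := fun r => Real.exp (pFF d c m r) * pFF1 d c m r with hWfdef
  set W1 : ℝ → ℝ := fun r =>
    Real.exp (pFF d c m r) * pFF1 d c m r * pFF1 d c m r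
      + Real.exp (pFF d c m r) * pFF2 d c m r with hW1def
  set Uf : ℝ → ℝ := fun r => Wf r / r with hUfdef
  set U1 : ℝ → ℝ := fun r => (W1 r * r - Wf r * 1) / r ^ 2 with hU1def
  have hWd : ∀ r : ℝ, R < r → HasDerivAt Wf (W1 r) r := by
    intro r hr
    have hp := iterLog_pos hR hr
    exact ((hasDerivAt_pFF d c hp).exp).mul (hasDerivAt_pFF1 d c hp)
  have hUd : ∀ r : ℝ, R < r → HasDerivAt Uf (U1 r) r := by
    intro r hr
    have hr0 : r ≠ 0 := (lt_of_le_of_lt hR0 hr).ne'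
    exact (hWd r hr).div (hasDerivAt_id r) hr0
  set e : Fin d → EuclideanSpace ℝ (Fin d) := fun i => EuclideanSpace.single i (1:ℝ) with hedef
  have hΨfderiv : ∀ z ∈ O, HasFDerivAt Ψ ((Uf ‖z‖ : ℝ) • (innerSL ℝ z)) z := by
    intro z hz
    have hrz : R < ‖z‖ := lt_trans hRR₂ hz
    have hz0 : z ≠ 0 := by
      intro h
      rw [h, norm_zero] at hrz
      linarith
    have hp := iterLog_pos hR hrz
    have hW : HasDerivAt (fun s => Real.exp (pFF d c m s)) (Wf ‖z‖) ‖z‖ :=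
      (hasDerivAt_pFF d c hp).exp
    have h := hasFDerivAt_radial hz0 hW
    have heq : Ψ =ᶠ[𝓝 z] fun y => Real.exp (pFF d c m ‖y‖) := by
      filter_upwards [hOopen.mem_nhds hz] with w hw
      exact hΨO w hw
    exact (h.congr_of_eventuallyEq heq).congr_fderiv rfl
  have hgi : ∀ (i : Fin d), ∀ z ∈ O, fderiv ℝ Ψ z (e i) = Uf ‖z‖ * (innerSL ℝ (e i)) z := by
    intro i z hz
    rw [(hΨfderiv z hz).fderiv]
    simp only [ContinuousLinearMap.coe_smul', Pi.smul_apply, innerSL_apply_apply, smul_eq_mul]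
    rw [real_inner_comm]
  have hg2 : ∀ (i : Fin d), ∀ z ∈ O,
      fderiv ℝ (fun y => fderiv ℝ Ψ y (e i)) z (e i)
        = Uf ‖z‖ * ⟪e i, e i⟫ + (innerSL ℝ (e i)) z * ((U1 ‖z‖ / ‖z‖) * ⟪z, e i⟫) := by
    intro i z hz
    have hrz : R < ‖z‖ := lt_trans hRR₂ hz
    have hz0 : z ≠ 0 := by
      intro h
      rw [h, norm_zero] at hrz
      linarith
    have hUrad : HasFDerivAt (fun y : EuclideanSpace ℝ (Fin d) => Uf ‖y‖)
        ((U1 ‖z‖ / ‖z‖) • innerSL ℝ z) z :=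
      hasFDerivAt_radial hz0 (hUd ‖z‖ hrz)
    have hmul := hUrad.mul ((innerSL ℝ (e i)).hasFDerivAt (x := z))
    have heq : (fun y => fderiv ℝ Ψ y (e i))
        =ᶠ[𝓝 z] fun y => Uf ‖y‖ * (innerSL ℝ (e i)) y := by
      filter_upwards [hOopen.mem_nhds hz] with w hw
      exact hgi i w hw
    rw [heq.fderiv_eq, show (fun y => Uf ‖y‖ * (innerSL ℝ (e i)) y)
        = (fun y => Uf ‖y‖) * ⇑(innerSL ℝ (e i)) from rfl, hmul.fderiv]
    simp only [ContinuousLinearMap.add_apply, ContinuousLinearMap.coe_smul', Pi.smul_apply,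
      ContinuousLinearMap.smul_apply, innerSL_apply_apply, smul_eq_mul]
  have hnormsq : ∀ z : EuclideanSpace ℝ (Fin d), ∑ i, ⟪e i, z⟫ * ⟪z, e i⟫ = ‖z‖ ^ 2 := by
    intro z
    have hb := (EuclideanSpace.basisFun (Fin d) ℝ).sum_inner_mul_inner z z
    have hbe : ∀ i, (EuclideanSpace.basisFun (Fin d) ℝ) i = e i := by
      intro i
      rw [hedef]
      exact EuclideanSpace.basisFun_apply _ _ i
    calc ∑ i, ⟪e i, z⟫ * ⟪z, e i⟫ = ∑ i, ⟪z, e i⟫ * ⟪e i, z⟫ := by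
          apply Finset.sum_congr rfl
          intro i _
          ring
      _ = ⟪z, z⟫ := by
          rw [← hb]
          apply Finset.sum_congr rfl
          intro i _
          rw [hbe i]
      _ = ‖z‖ ^ 2 := real_inner_self_eq_norm_sq z
  have hsum2 : ∀ z ∈ O, ∑ i, fderiv ℝ (fun y => fderiv ℝ Ψ y (e i)) z (e i)
      = (d : ℝ) * Uf ‖z‖ + U1 ‖z‖ * ‖z‖ := by
    intro z hz
    have hrz : R < ‖z‖ := lt_trans hRR₂ hz
    have hz0 : (0:ℝ) < ‖z‖ := lt_of_le_of_lt hR0 hrz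
    have hee : ∀ i : Fin d, ⟪e i, e i⟫ = (1:ℝ) := by
      intro i
      rw [hedef]
      simp [EuclideanSpace.inner_single_left, EuclideanSpace.single_apply]
    rw [Finset.sum_congr rfl (fun i _ => hg2 i z hz), Finset.sum_add_distrib]
    have h1 : ∑ i : Fin d, Uf ‖z‖ * ⟪e i, e i⟫ = (d:ℝ) * Uf ‖z‖ := by
      rw [Finset.sum_congr rfl (fun i _ => by rw [hee i, mul_one])]
      simp [Finset.card_univ, mul_comm]
    have h2 : ∑ i : Fin d, (innerSL ℝ (e i)) z * ((U1 ‖z‖ / ‖z‖) * ⟪z, e i⟫)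
        = U1 ‖z‖ * ‖z‖ := by
      have : ∀ i : Fin d, (innerSL ℝ (e i)) z * ((U1 ‖z‖ / ‖z‖) * ⟪z, e i⟫)
          = (U1 ‖z‖ / ‖z‖) * (⟪e i, z⟫ * ⟪z, e i⟫) := by
        intro i
        simp only [innerSL_apply_apply]
        ring
      rw [Finset.sum_congr rfl (fun i _ => this i), ← Finset.mul_sum, hnormsq z]
      field_simp
    rw [h1, h2]
  have hptwise : ∀ z ∈ O, V z * Ψ z ≤ (d:ℝ) * Uf ‖z‖ + U1 ‖z‖ * ‖z‖ := by
    intro z hz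
    have hrz : R < ‖z‖ := lt_trans hRR₂ hz
    have hp := iterLog_pos hR hrz
    have hz0 : (0:ℝ) < ‖z‖ := lt_of_le_of_lt hR0 hrz
    have hexp : (0:ℝ) < Real.exp (pFF d c m ‖z‖) := Real.exp_pos _
    have h3 : V z ≤ pFF1 d c m ‖z‖ ^ 2 + pFF2 d c m ‖z‖
        + ((d:ℝ) - 1) * pFF1 d c m ‖z‖ / ‖z‖ := le_trans (hV z hrz) (key_ineq d c hp)
    rw [hΨO z hz]
    have hΔ : (d:ℝ) * Uf ‖z‖ + U1 ‖z‖ * ‖z‖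
        = (pFF1 d c m ‖z‖ ^ 2 + pFF2 d c m ‖z‖ + ((d:ℝ) - 1) * pFF1 d c m ‖z‖ / ‖z‖)
            * Real.exp (pFF d c m ‖z‖) := by
      rw [hUfdef, hU1def, hW1def, hWfdef]
      simp only
      field_simp
      ring
    rw [hΔ]
    exact mul_le_mul_of_nonneg_right h3 hexp.le
  -- differentiability / integrability bookkeeping
  have hφd : Differentiable ℝ φ := hφ.differentiable (by simp)
  have hΨd : Differentiable ℝ Ψ := hΨsm.differentiable (by simp)
  have hgism : ∀ i : Fin d, ContDiff ℝ (⊤ : ℕ∞) (fun y => fderiv ℝ Ψ y (e i)) :=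
    fun i => (hΨsm.fderiv_right htop1).clm_apply contDiff_const
  have hpφsm : ∀ i : Fin d, ContDiff ℝ (⊤ : ℕ∞) (fun y => fderiv ℝ φ y (e i)) :=
    fun i => (hφ.fderiv_right htop1).clm_apply contDiff_const
  have hg2sm : ∀ i : Fin d, ContDiff ℝ (⊤ : ℕ∞)
      (fun y => fderiv ℝ (fun z => fderiv ℝ Ψ z (e i)) y (e i)) :=
    fun i => ((hgism i).fderiv_right htop1).clm_apply contDiff_const
  have hφK : ∀ x, x ∉ K → φ x = 0 := fun x hx => image_eq_zero_of_notMem_tsupport hx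
  have hpφK : ∀ x, x ∉ K → fderiv ℝ φ x = 0 := by
    intro x hx
    have h := notMem_tsupport_iff_eventuallyEq.mp hx
    rw [h.fderiv_eq]
    exact fderiv_const_apply (0:ℝ)
  have hint1 : ∀ i : Fin d,
      Integrable (fun x => fderiv ℝ φ x (e i) * fderiv ℝ Ψ x (e i)) := by
    intro i
    apply Continuous.integrable_of_hasCompactSupport
      (((hpφsm i).continuous).mul ((hgism i).continuous))
    apply HasCompactSupport.intro hK
    intro x hx
    simp [hpφK x hx]
  have hint2 : ∀ i : Fin d, Integrable (fun x => φ x * fderiv ℝ Ψ x (e i)) := by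
    intro i
    apply Continuous.integrable_of_hasCompactSupport
      (hφ.continuous.mul ((hgism i).continuous))
    apply HasCompactSupport.intro hK
    intro x hx
    simp [hφK x hx]
  have hint3 : ∀ i : Fin d, Integrable
      (fun x => φ x * fderiv ℝ (fun y => fderiv ℝ Ψ y (e i)) x (e i)) := by
    intro i
    apply Continuous.integrable_of_hasCompactSupport
      (hφ.continuous.mul ((hg2sm i).continuous))
    apply HasCompactSupport.intro hK
    intro x hx
    simp [hφK x hx]
  have hintV : Integrable (fun x => V x * (φ x * Ψ x)) := by
    have h1 : IntegrableOn V K := hVloc.integrableOn_compact_subset hφsupp hK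
    have h2 : IntegrableOn (fun x => V x * (φ x * Ψ x)) K :=
      h1.mul_continuousOn ((hφ.continuous.mul hΨsm.continuous)).continuousOn hK
    have h3 : ∀ x, x ∉ K → V x * (φ x * Ψ x) = 0 := by
      intro x hx
      rw [hφK x hx]
      ring
    rw [← integrableOn_univ, ← Set.compl_union_self K]
    apply integrableOn_union.mpr
    constructor
    · exact (integrableOn_zero).congr_fun (fun x hx => (h3 x hx).symm)
        hK.isClosed.measurableSet.compl
    · exact h2
  have hgrad : ∀ (f : EuclideanSpace ℝ (Fin d) → ℝ) (x : EuclideanSpace ℝ (Fin d)),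
      DifferentiableAt ℝ f x → ∀ v, ⟪gradient f x, v⟫ = fderiv ℝ f x v := by
    intro f x hf v
    rw [hf.hasGradientAt.hasFDerivAt.fderiv, InnerProductSpace.toDual_apply_apply]
  have hEq : ∀ x, (⟪gradient φ x, gradient ψ x⟫ + V x * (φ x * ψ x))
      = (∑ i, fderiv ℝ φ x (e i) * fderiv ℝ Ψ x (e i)) + V x * (φ x * Ψ x) := by
    intro x
    by_cases hx : x ∈ K
    · have hxO : x ∈ O := hKO hx
      have hψΨ : ψ =ᶠ[𝓝 x] Ψ := by
        filter_upwards [hOopen.mem_nhds hxO] with w hw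
        rw [hΨO w hw, hψexp w (lt_trans hRR₂ hw)]
      have h1 : gradient ψ x = gradient Ψ x := hψΨ.gradient_eq
      have hψx : ψ x = Ψ x := hψΨ.self_of_nhds
      rw [h1, hψx]
      congr 1
      rw [← (EuclideanSpace.basisFun (Fin d) ℝ).sum_inner_mul_inner (gradient φ x) (gradient Ψ x)]
      apply Finset.sum_congr rfl
      intro i _
      rw [real_inner_comm (gradient Ψ x)
        ((EuclideanSpace.basisFun (Fin d) ℝ) i : EuclideanSpace ℝ (Fin d))]
      rw [hgrad φ x (hφd x), hgrad Ψ x (hΨd x)]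
      have hbe : ((EuclideanSpace.basisFun (Fin d) ℝ) i : EuclideanSpace ℝ (Fin d)) = e i :=
        EuclideanSpace.basisFun_apply _ _ i
      rw [hbe]
    · have h0 : φ x = 0 := hφK x hx
      have hgφ : gradient φ x = 0 := by
        have h := notMem_tsupport_iff_eventuallyEq.mp hx
        rw [h.gradient_eq]
        have h0 : HasGradientAt (fun _ : EuclideanSpace ℝ (Fin d) => (0:ℝ)) 0 x := by
          rw [hasGradientAt_iff_hasFDerivAt, map_zero]
          exact hasFDerivAt_const 0 x
        exact h0.gradient
      rw [hgφ, h0]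
      simp [hpφK x hx]
  calc ∫ x, (⟪gradient φ x, gradient ψ x⟫ + V x * (φ x * ψ x))
      = ∫ x, ((∑ i, fderiv ℝ φ x (e i) * fderiv ℝ Ψ x (e i)) + V x * (φ x * Ψ x)) :=
        integral_congr_ae (Filter.Eventually.of_forall hEq)
    _ = (∑ i, ∫ x, fderiv ℝ φ x (e i) * fderiv ℝ Ψ x (e i)) + ∫ x, V x * (φ x * Ψ x) := by
        rw [integral_add (integrable_finset_sum _ (fun i _ => hint1 i)) hintV,
          integral_finset_sum _ (fun i _ => hint1 i)]
    _ = (∑ i, -∫ x, φ x * fderiv ℝ (fun y => fderiv ℝ Ψ y (e i)) x (e i))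
          + ∫ x, V x * (φ x * Ψ x) := by
        congr 1
        apply Finset.sum_congr rfl
        intro i _
        have h := integral_mul_fderiv_eq_neg_fderiv_mul_of_integrable
          (hint1 i) (hint3 i) (hint2 i) (fun x _ => hφd x) (fun x _ => (hgism i).differentiable (by simp) x)
        rw [h, neg_neg]
    _ = (∫ x, V x * (φ x * Ψ x))
          - ∑ i, ∫ x, φ x * fderiv ℝ (fun y => fderiv ℝ Ψ y (e i)) x (e i) := by
        rw [Finset.sum_neg_distrib]
        ring
    _ = (∫ x, V x * (φ x * Ψ x))
          - ∫ x, ∑ i, φ x * fderiv ℝ (fun y => fderiv ℝ Ψ y (e i)) x (e i) := by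
        rw [integral_finset_sum _ (fun i _ => hint3 i)]
    _ = ∫ x, (V x * (φ x * Ψ x)
          - ∑ i, φ x * fderiv ℝ (fun y => fderiv ℝ Ψ y (e i)) x (e i)) :=
        (integral_sub hintV (integrable_finset_sum Finset.univ (fun i _ => hint3 i))).symm
    _ ≤ 0 := by
        apply integral_nonpos
        intro x
        by_cases hx : x ∈ K
        · have hxO : x ∈ O := hKO hx
          have hsum : ∑ i, φ x * fderiv ℝ (fun y => fderiv ℝ Ψ y (e i)) x (e i)
              = φ x * ((d:ℝ) * Uf ‖x‖ + U1 ‖x‖ * ‖x‖) := by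
            rw [← Finset.mul_sum, hsum2 x hxO]
          have h2 : V x * (φ x * Ψ x) - φ x * ((d:ℝ) * Uf ‖x‖ + U1 ‖x‖ * ‖x‖)
              = φ x * (V x * Ψ x - ((d:ℝ) * Uf ‖x‖ + U1 ‖x‖ * ‖x‖)) := by ring
          show V x * (φ x * Ψ x)
              - ∑ i, φ x * fderiv ℝ (fun y => fderiv ℝ Ψ y (e i)) x (e i) ≤ 0
          rw [hsum, h2]
          exact mul_nonpos_iff.mpr (Or.inl ⟨hφ0 x, sub_nonpos.mpr (hptwise x hxO)⟩)
        · show V x * (φ x * Ψ x)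
              - ∑ i, φ x * fderiv ℝ (fun y => fderiv ℝ Ψ y (e i)) x (e i) ≤ 0
          rw [hφK x hx]
          simp
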